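/- Let Σ be a ranked alphabet. If R is a regular string language over the alphabet Σ_0, then the tree language {t ∈ T_Σ | yield(t) ∈ R} is recognizable. -/

import Mathlib

inductive RTree (σ : ℕ → Type) : Type
  | node {k : ℕ} (a : σ k) (ts : Fin k → RTree σ) : RTree σ

/-- The contribution of a single symbol to the yield: a rank-0 symbol `a`
contributes `f a`, symbols of positive rank contribute nothing. -/
def leafPart {σ : ℕ → Type} {Γ : Type} (f : σ 0 → List Γ) : ∀ k, σ k → List Γ
  | 0, a => f a
  | _ + 1, _ => []

/-- The yield of a tree, where each rank-0 symbol `a` contributes the string `f a`: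
`yield(a) = f a` and `yield(a[t₁⋯t_k]) = yield(t₁)⋯yield(t_k)`. -/
def yieldWith {σ : ℕ → Type} {Γ : Type} (f : σ 0 → List Γ) : RTree σ → List Γ
  | @RTree.node _ k a ts => leafPart f k a ++ (List.ofFn fun i => yieldWith f (ts i)).flatten

/-- Deterministic bottom-up finite tree automaton. -/
structure DBUA (σ : ℕ → Type) (Q : Type) where
  δ : ∀ k, σ k → (Fin k → Q) → Q
  F : Set Q

def DBUA.run {σ : ℕ → Type} {Q : Type} (M : DBUA σ Q) : RTree σ → Q
  | .node a ts => M.δ _ a fun i => M.run (ts i)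

def DBUA.lang {σ : ℕ → Type} {Q : Type} (M : DBUA σ Q) : Set (RTree σ) :=
  {t | M.run t ∈ M.F}

/-- A tree language is recognizable if it is recognized by some deterministic
bottom-up finite tree automaton with finitely many states. -/
def Recognizable {σ : ℕ → Type} (L : Set (RTree σ)) : Prop :=
  ∃ (Q : Type) (_ : Fintype Q) (M : DBUA σ Q), L = M.lang

/-- A string language is regular if it is accepted by a deterministic finite
automaton with finitely many states. -/
def RegularLang {α : Type} (R : Language α) : Prop :=
  ∃ (Q : Type) (_ : Fintype Q) (M : DFA α Q), M.accepts = R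

/-- Theorem 3.30: if `R` is a regular string language over `Σ₀`, then the tree
language `{t ∈ T_Σ | yield(t) ∈ R}` is recognizable (the yield drops the
distinguished symbol `e`). -/
theorem yield_in_regular_recognizable {σ : ℕ → Type} [DecidableEq (σ 0)] (e : σ 0)
    (R : Language (σ 0)) (hR : RegularLang R) :
    Recognizable {t : RTree σ |
      yieldWith (fun a => if a = e then [] else [a]) t ∈ R} := by
  obtain ⟨Q, hQ, M, hM⟩ := hR
  letI := Classical.decEq Q
  set f : σ 0 → List (σ 0) := fun a => if a = e then [] else [a] with hf
  refine ⟨Q → Q, Pi.instFintype, ⟨fun k a h q =>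
      (List.ofFn h).foldl (fun q g => g q) (M.evalFrom q (leafPart f k a)),
      {g | g M.start ∈ M.accept}⟩, ?_⟩
  have key : ∀ t : RTree σ,
      (DBUA.run ⟨fun k a h q =>
        (List.ofFn h).foldl (fun q g => g q) (M.evalFrom q (leafPart f k a)),
        {g | g M.start ∈ M.accept}⟩ t) = fun q => M.evalFrom q (yieldWith f t) := by
    intro t
    induction t with
    | node a ts ih =>
      funext q
      simp only [DBUA.run, yieldWith]
      rw [show (M.evalFrom q (leafPart f _ a ++ (List.ofFn fun i => yieldWith f (ts i)).flatten))
          = M.evalFrom (M.evalFrom q (leafPart f _ a))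
            ((List.ofFn fun i => yieldWith f (ts i)).flatten) from List.foldl_append ..]
      generalize M.evalFrom q (leafPart f _ a) = q0
      simp only [DFA.evalFrom, List.foldl_flatten]
      simp only [DFA.evalFrom] at ih
      simp only [ih]
      show List.foldl (fun q g => g q) q0
          (List.ofFn ((fun l q => List.foldl M.step q l) ∘ fun i => yieldWith f (ts i))) = _
      rw [← List.map_ofFn, List.foldl_map]
  ext t
  simp only [DBUA.lang, Set.mem_setOf_eq, key, ← hM]
  rfl
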